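/- Let g ⊆ gl(V) with V finite-dimensional over ℝ, and define g^(1) := (V*⊗g) ∩ (S²(V*)⊗V). If R : V × V* → g gives rise (as in the V ⊕ V* setting) to a formal curvature tensor on V ⊕ V* satisfying the first Bianchi identity, then for every fixed z' ∈ V*, the bilinear map (x,y) ↦ R(x,z')y on V × V belongs to g^(1), i.e. it is symmetric in (x,y) and x ↦ R(x,z') takes values in g. -/

import Mathlib

attribute [local instance] LieRing.ofAssociativeRing

theorem stmt_17 (V : Type*) [AddCommGroup V] [Module ℝ V] [FiniteDimensional ℝ V]
    (g : LieSubalgebra ℝ (Module.End ℝ V))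
    (R : V →ₗ[ℝ] Module.Dual ℝ V →ₗ[ℝ] Module.End ℝ V)
    (hval : ∀ x u, R x u ∈ g)
    (hBianchi : ∀ a b c : V × Module.Dual ℝ V,
      (((R a.1 b.2 - R b.1 a.2) c.1, -(c.2.comp (R a.1 b.2 - R b.1 a.2))) :
        V × Module.Dual ℝ V)
      + ((R b.1 c.2 - R c.1 b.2) a.1, -(a.2.comp (R b.1 c.2 - R c.1 b.2)))
      + ((R c.1 a.2 - R a.1 c.2) b.1, -(b.2.comp (R c.1 a.2 - R a.1 c.2))) = 0) :
    ∀ z' : Module.Dual ℝ V,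
      (∀ x y : V, R x z' y = R y z' x) ∧ (∀ x : V, R x z' ∈ g) := by
  intro z'
  refine ⟨?_, fun x => hval x z'⟩
  intro x y
  have h := congrArg Prod.fst (hBianchi (x, 0) (y, 0) (0, z'))
  simp at h
  rw [eq_comm, ← sub_eq_zero, sub_eq_add_neg]
  exact h
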